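/- There exists a function f ∈ L^∞(ℝ) and a set E ⊂ ℝ of infinite (in particular, nonzero) Lebesgue measure such that for every x ∈ E, the square function value S f(x) = (∑_{k∈ℤ} sup_{I ∈ 𝓘_k} |M_{I+x} f(x) − E_k f(x)|²)^{1/2} equals +∞, where 𝓘_k is the set of intervals containing 0 of length 2^k. -/

import Mathlib

open MeasureTheory Set ENNReal

/-- Dyadic conditional expectation at scale `2^k`. -/
noncomputable def dyadicE (f : ℝ → ℝ) (k : ℤ) (x : ℝ) : ℝ :=
  (2:ℝ) ^ (-k) *
    ∫ y in Set.Ico ((⌊x / (2:ℝ) ^ k⌋ : ℝ) * (2:ℝ) ^ k)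
      ((⌊x / (2:ℝ) ^ k⌋ + 1 : ℝ) * (2:ℝ) ^ k), f y

/-- The square function `S`:  `S f(x) = (∑_{k∈ℤ} sup_{I ∈ 𝓘_k} |M_{I+x} f − E_k f(x)|²)^{1/2}`,
where `𝓘_k` is the family of intervals containing `0` of length `2^k`, an interval
`I ∈ 𝓘_k` being recorded by its left endpoint `a ∈ [-2^k, 0]`, `I = [a, a + 2^k)`. -/
noncomputable def sqFn (f : ℝ → ℝ) (x : ℝ) : ℝ≥0∞ :=
  (∑' k : ℤ, ⨆ a ∈ Set.Icc (-(2:ℝ) ^ k) 0,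
      ENNReal.ofReal
        (|(2:ℝ) ^ (-k) * (∫ y in Set.Ico (x + a) (x + a + (2:ℝ) ^ k), f y) -
            dyadicE f k x| ^ 2)) ^ (1/2 : ℝ)

lemma integral_ind (a b : ℝ) (ha : a ≤ 0) (hb : 0 ≤ b) :
    ∫ y in Set.Ico a b, (Set.Ici (0:ℝ)).indicator (fun _ => (1:ℝ)) y = b := by
  rw [setIntegral_indicator measurableSet_Ici, setIntegral_const]
  have h : Set.Ico a b ∩ Set.Ici 0 = Set.Ico 0 b := by
    ext y
    simp only [mem_inter_iff, mem_Ico, mem_Ici]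
    constructor
    · rintro ⟨⟨_, h2⟩, h3⟩; exact ⟨h3, h2⟩
    · rintro ⟨h1, h2⟩; exact ⟨⟨ha.trans h1, h2⟩, h1⟩
  rw [h, measureReal_def, Real.volume_Ico, sub_zero, ENNReal.toReal_ofReal hb, smul_eq_mul, mul_one]

lemma term_lb (x : ℝ) (hx : 0 ≤ x) (k : ℤ) (hk : 2 * x < (2:ℝ) ^ k) :
    ENNReal.ofReal (1/4 : ℝ) ≤
      ⨆ a ∈ Set.Icc (-(2:ℝ) ^ k) 0,
        ENNReal.ofReal
          (|(2:ℝ) ^ (-k) * (∫ y in Set.Ico (x + a) (x + a + (2:ℝ) ^ k),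
              (Set.Ici (0:ℝ)).indicator (fun _ => (1:ℝ)) y) -
              dyadicE ((Set.Ici (0:ℝ)).indicator (fun _ => (1:ℝ))) k x| ^ 2) := by
  have hpow : (0:ℝ) < (2:ℝ) ^ k := zpow_pos (by norm_num) k
  have hxk : x < (2:ℝ) ^ k := lt_of_le_of_lt (by linarith) hk
  have hfloor : ⌊x / (2:ℝ) ^ k⌋ = 0 := by
    rw [Int.floor_eq_zero_iff]
    constructor
    · positivity
    · rw [div_lt_one hpow]; exact hxk
  have hE : dyadicE ((Set.Ici (0:ℝ)).indicator (fun _ => (1:ℝ))) k x = 1 := by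
    rw [dyadicE, hfloor]
    push_cast
    rw [zero_mul, zero_add, one_mul, integral_ind 0 ((2:ℝ)^k) le_rfl hpow.le]
    rw [zpow_neg, inv_mul_cancel₀ hpow.ne']
  have hmem : -(2:ℝ) ^ k ∈ Set.Icc (-(2:ℝ) ^ k) 0 := ⟨le_rfl, by linarith⟩
  refine le_trans ?_ (le_biSup _ hmem)
  have h1 : x + -(2:ℝ) ^ k + (2:ℝ) ^ k = x := by ring
  rw [h1, hE, integral_ind (x + -(2:ℝ)^k) x (by linarith) hx]
  apply ENNReal.ofReal_le_ofReal
  have ht : (2:ℝ) ^ (-k) * x < 1/2 := by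
    rw [zpow_neg]
    rw [inv_mul_lt_iff₀ hpow]
    linarith
  have ht0 : 0 ≤ (2:ℝ) ^ (-k) * x := by positivity
  have habs : |(2:ℝ) ^ (-k) * x - 1| = 1 - (2:ℝ) ^ (-k) * x := by
    rw [abs_of_nonpos (by linarith)]; ring
  rw [habs]
  nlinarith

/-- there exist `f ∈ L^∞(ℝ)` and a set `E` of infinite Lebesgue measure
such that `S f(x) = +∞` for every `x ∈ E`. -/
theorem stmt3 :
    ∃ (f : ℝ → ℝ) (E : Set ℝ), MemLp f ⊤ (volume : Measure ℝ) ∧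
      volume E = ⊤ ∧ ∀ x ∈ E, sqFn f x = ⊤ := by
  refine ⟨(Set.Ici (0:ℝ)).indicator (fun _ => (1:ℝ)), Set.Ici 0, ?_, ?_, ?_⟩
  · refine memLp_top_of_bound
      ((measurable_const.indicator measurableSet_Ici).aestronglyMeasurable) 1
      (Filter.Eventually.of_forall fun y => ?_)
    by_cases h : y ∈ Set.Ici (0:ℝ) <;>
      simp [Set.indicator_apply, h]
  · exact Real.volume_Ici
  · intro x hx
    have hx0 : (0:ℝ) ≤ x := hx
    -- choose K with 2^K > 2x
    obtain ⟨K, hK⟩ := pow_unbounded_of_one_lt (2 * x) (by norm_num : (1:ℝ) < 2)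
    have hsum : (∑' k : ℤ, ⨆ a ∈ Set.Icc (-(2:ℝ) ^ k) 0,
        ENNReal.ofReal
          (|(2:ℝ) ^ (-k) * (∫ y in Set.Ico (x + a) (x + a + (2:ℝ) ^ k),
              (Set.Ici (0:ℝ)).indicator (fun _ => (1:ℝ)) y) -
              dyadicE ((Set.Ici (0:ℝ)).indicator (fun _ => (1:ℝ))) k x| ^ 2)) = ⊤ := by
      rw [eq_top_iff]
      have hinj : Function.Injective (fun n : ℕ => (K:ℤ) + n) := by
        intro a b h; simpa using h
      calc (⊤:ℝ≥0∞) = ∑' _ : ℕ, ENNReal.ofReal (1/4 : ℝ) := by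
            rw [ENNReal.tsum_const_eq_top_of_ne_zero]
            simp
        _ ≤ ∑' n : ℕ, ⨆ a ∈ Set.Icc (-(2:ℝ) ^ ((K:ℤ) + n)) 0,
              ENNReal.ofReal
                (|(2:ℝ) ^ (-((K:ℤ) + n)) * (∫ y in Set.Ico (x + a) (x + a + (2:ℝ) ^ ((K:ℤ)+n)),
                    (Set.Ici (0:ℝ)).indicator (fun _ => (1:ℝ)) y) -
                    dyadicE ((Set.Ici (0:ℝ)).indicator (fun _ => (1:ℝ))) ((K:ℤ)+n) x| ^ 2) := by
            refine ENNReal.tsum_le_tsum fun n => term_lb x hx0 _ ?_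
            calc 2 * x < (2:ℝ) ^ K := hK
              _ ≤ (2:ℝ) ^ ((K:ℤ) + n) := by
                  rw [show ((K:ℤ) + n) = ((K + n : ℕ) : ℤ) by push_cast; ring,
                    zpow_natCast]
                  exact pow_le_pow_right₀ (by norm_num) (by omega)
        _ ≤ _ := ENNReal.tsum_comp_le_tsum_of_injective hinj _
    rw [sqFn, hsum]
    exact ENNReal.top_rpow_of_pos (by norm_num)
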